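/- Let X be a td-lcsc space, let σ : X → X be a surjective local homeomorphism, let n ≥ 1, and let F ∈ C_c(R(σⁿ), ℤ), extended by 0 off R(σⁿ). Let σ_*(F)(a,b) = Σ_{u : σ(u) = a} Σ_{w : σ(w) = b} F(u,w). Then for every x ∈ X, Σ_{y : σ(y) = x} Σ_{z : σⁿ(z) = σⁿ(y)} (F(z,y) − F(y,z)) = Σ_{v : σ^{n−1}(v) = σ^{n−1}(x)} (σ_*(F)(v,x) − σ_*(F)(x,v)); that is, σ_*(∂₁⁽ⁿ⁾F) = ∂₁⁽ⁿ⁻¹⁾(σ_*(F)). -/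
import Mathlib

/-- `finsum` of a function vanishing everywhere is zero, for `Sort`-indexed sums. -/
theorem finsum_eq_zero_of_forall_eq_zero' {M : Type*} [AddCommMonoid M] {α : Sort*}
    {f : α → M} (h : ∀ a, f a = 0) : ∑ᶠ a, f a = 0 :=
  (congrArg finsum (funext h)).trans finsum_zero

/-- The intersection of a fiber of a local homeomorphism with a compact set is finite. -/
lemma fiber_inter_compact_finite' {X Y : Type*} [TopologicalSpace X] [TopologicalSpace Y]
    [T2Space Y] {f : X → Y} (hf : IsLocalHomeomorph f) (a : Y) {C : Set X}
    (hC : IsCompact C) : ({z | f z = a} ∩ C).Finite := by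
  have hcl : IsClosed {z | f z = a} := isClosed_singleton.preimage hf.continuous
  set s : Set X := {z | f z = a} ∩ C with hs
  have hsc : IsCompact s := hC.inter_left hcl
  have key : ∀ z : s, ∃ U : Set X, IsOpen U ∧ (z : X) ∈ U ∧
      ∀ z' ∈ s, z' ∈ U → z' = (z : X) := by
    rintro ⟨z, hz⟩
    obtain ⟨e, hze, hfe⟩ := hf z
    refine ⟨e.source, e.open_source, hze, fun z' hz' hz'e => ?_⟩
    have hfz : f z' = f z := by
      have h1 : f z' = a := hz'.1
      have h2 : f z = a := hz.1
      rw [h1, h2]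
    have : e z' = e z := by rw [← hfe]; exact hfz
    exact e.injOn hz'e hze this
  choose U hUopen hUmem hUuniq using key
  rcases hsc.elim_finite_subcover U hUopen
      (fun z hz => Set.mem_iUnion.2 ⟨⟨z, hz⟩, hUmem ⟨z, hz⟩⟩) with ⟨t, ht⟩
  have : s ⊆ Subtype.val '' (t : Set s) := by
    intro z hz
    rcases Set.mem_iUnion₂.1 (ht hz) with ⟨i, hit, hiz⟩
    exact ⟨i, hit, (hUuniq i z hz hiz).symm⟩
  exact Set.Finite.subset ((t.finite_toSet).image _) this

/-- `σ_*(∂₁⁽ⁿ⁾F) = ∂₁⁽ⁿ⁻¹⁾(σ_*(F))` for `F ∈ C_c(R(σⁿ), ℤ)` extended by `0`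
off `R(σⁿ)`. -/
theorem sigmaAst_boundary_commutes
    {X : Type*} [TopologicalSpace X]
    [LocallyCompactSpace X] [T2Space X] [SecondCountableTopology X]
    [TotallyDisconnectedSpace X]
    (σ : X → X) (hσ : IsLocalHomeomorph σ) (hsurj : Function.Surjective σ)
    (n : ℕ) (hn : 1 ≤ n)
    (F : X × X → ℤ)
    (hFcont : Continuous fun p : {q : X × X // σ^[n] q.1 = σ^[n] q.2} => F p.val)
    (hFsupp : HasCompactSupport
      fun p : {q : X × X // σ^[n] q.1 = σ^[n] q.2} => F p.val)
    (hF0 : ∀ p : X × X, σ^[n] p.1 ≠ σ^[n] p.2 → F p = 0) :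
    ∀ x : X,
      (∑ᶠ (y : X) (_ : σ y = x), ∑ᶠ (z : X) (_ : σ^[n] z = σ^[n] y),
          (F (z, y) - F (y, z))) =
        ∑ᶠ (v : X) (_ : σ^[n - 1] v = σ^[n - 1] x),
          ((∑ᶠ (u : X) (_ : σ u = v), ∑ᶠ (w : X) (_ : σ w = x), F (u, w)) -
            (∑ᶠ (u : X) (_ : σ u = x), ∑ᶠ (w : X) (_ : σ w = v), F (u, w))) := by
  classical
  intro x
  -- iterates of a local homeomorphism are local homeomorphisms
  have hσk : ∀ k : ℕ, IsLocalHomeomorph (σ^[k]) := by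
    intro k
    induction k with
    | zero =>
        rw [Function.iterate_zero]
        simpa using (Homeomorph.refl X).isLocalHomeomorph
    | succ k ih =>
        rw [Function.iterate_succ']
        exact hσ.comp ih
  have hiter : ∀ y : X, σ^[n] y = σ^[n - 1] (σ y) := by
    intro y
    conv_lhs => rw [← Nat.succ_pred_eq_of_pos hn]
    exact Function.iterate_succ_apply σ (n - 1) y
  -- the compact "support" in `X × X`
  set G : {q : X × X // σ^[n] q.1 = σ^[n] q.2} → ℤ := fun p => F p.val with hG
  have hKc : IsCompact (Subtype.val '' tsupport G) :=
    IsCompact.image (hFsupp : IsCompact (tsupport G)) continuous_subtype_val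
  set K : Set (X × X) := Subtype.val '' tsupport G with hKdef
  have hFK : ∀ p : X × X, F p ≠ 0 → p ∈ K := by
    intro p hp
    by_cases h : σ^[n] p.1 = σ^[n] p.2
    · exact ⟨⟨p, h⟩, subset_tsupport G (by simpa [hG] using hp), rfl⟩
    · exact absurd (hF0 p h) hp
  set W : Set X := (Prod.fst '' K) ∪ (Prod.snd '' K) with hWdef
  have hWc : IsCompact W := (hKc.image continuous_fst).union (hKc.image continuous_snd)
  have hF1 : ∀ p : X × X, F p ≠ 0 → p.1 ∈ W := fun p hp => Or.inl ⟨p, hFK p hp, rfl⟩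
  have hF2 : ∀ p : X × X, F p ≠ 0 → p.2 ∈ W := fun p hp => Or.inr ⟨p, hFK p hp, rfl⟩
  -- the three relevant finite sets
  have hYfin : ({y | σ y = x} ∩ W).Finite := fiber_inter_compact_finite' hσ x hWc
  have hZfin : ({z | σ^[n] z = σ^[n - 1] x} ∩ W).Finite :=
    fiber_inter_compact_finite' (hσk n) _ hWc
  have hVfin : ({v | σ^[n - 1] v = σ^[n - 1] x} ∩ (σ '' W)).Finite :=
    fiber_inter_compact_finite' (hσk (n - 1)) _ (hWc.image hσ.continuous)
  set Ys := hYfin.toFinset with hYs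
  set Zs := hZfin.toFinset with hZs
  set Vs := hVfin.toFinset with hVs
  have hYmem : ∀ y, y ∈ Ys ↔ σ y = x ∧ y ∈ W := by
    intro y; rw [hYs, Set.Finite.mem_toFinset]; exact Set.mem_inter_iff _ _ _
  have hZmem : ∀ z, z ∈ Zs ↔ σ^[n] z = σ^[n - 1] x ∧ z ∈ W := by
    intro z; rw [hZs, Set.Finite.mem_toFinset]; exact Set.mem_inter_iff _ _ _
  have hVmem : ∀ v, v ∈ Vs ↔ σ^[n - 1] v = σ^[n - 1] x ∧ v ∈ σ '' W := by
    intro v; rw [hVs, Set.Finite.mem_toFinset]; exact Set.mem_inter_iff _ _ _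
  -- left-hand side as a finite sum
  have hLHS : (∑ᶠ (y : X) (_ : σ y = x), ∑ᶠ (z : X) (_ : σ^[n] z = σ^[n] y),
      (F (z, y) - F (y, z)))
      = ∑ y ∈ Ys, ∑ z ∈ Zs, (F (z, y) - F (y, z)) := by
    rw [finsum_cond_eq_sum_of_cond_iff _ (t := Ys) (fun {y} hy => ?_)]
    · refine Finset.sum_congr rfl fun y hy => ?_
      have hyx : σ y = x := ((hYmem y).1 hy).1
      have hTy : σ^[n] y = σ^[n - 1] x := by rw [hiter y, hyx]
      refine finsum_cond_eq_sum_of_cond_iff _ (fun {z} hz => ?_)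
      have hzW : z ∈ W := by
        by_contra hzW
        apply hz
        have h1 : F (z, y) = 0 := by by_contra h; exact hzW (hF1 (z, y) h)
        have h2 : F (y, z) = 0 := by by_contra h; exact hzW (hF2 (y, z) h)
        rw [h1, h2, sub_zero]
      rw [hZmem]
      exact ⟨fun h => ⟨h.trans hTy, hzW⟩, fun h => h.1.trans hTy.symm⟩
    · rw [hYmem]
      refine ⟨fun hyx => ⟨hyx, ?_⟩, fun h => h.1⟩
      by_contra hyW
      apply hy
      refine finsum_eq_zero_of_forall_eq_zero fun z => ?_
      refine finsum_eq_zero_of_forall_eq_zero' fun _ => ?_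
      have h1 : F (z, y) = 0 := by by_contra h; exact hyW (hF2 (z, y) h)
      have h2 : F (y, z) = 0 := by by_contra h; exact hyW (hF1 (y, z) h)
      rw [h1, h2, sub_zero]
  -- the inner sum over the fiber of `x` for the first term of the RHS
  have hPinner : ∀ u : X, (∑ᶠ (w : X) (_ : σ w = x), F (u, w)) = ∑ w ∈ Ys, F (u, w) := by
    intro u
    refine finsum_cond_eq_sum_of_cond_iff _ (fun {w} hw => ?_)
    rw [hYmem]
    exact ⟨fun h => ⟨h, hF2 (u, w) hw⟩, fun h => h.1⟩
  -- right-hand side as a finite sum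
  have hRHS : (∑ᶠ (v : X) (_ : σ^[n - 1] v = σ^[n - 1] x),
      ((∑ᶠ (u : X) (_ : σ u = v), ∑ᶠ (w : X) (_ : σ w = x), F (u, w)) -
        (∑ᶠ (u : X) (_ : σ u = x), ∑ᶠ (w : X) (_ : σ w = v), F (u, w))))
      = ∑ v ∈ Vs,
        ((∑ u ∈ Zs.filter (fun u => σ u = v), ∑ w ∈ Ys, F (u, w)) -
          (∑ u ∈ Ys, ∑ w ∈ Zs.filter (fun w => σ w = v), F (u, w))) := by
    rw [finsum_cond_eq_sum_of_cond_iff _ (t := Vs) (fun {v} hv => ?_)]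
    · refine Finset.sum_congr rfl fun v hv => ?_
      have hvV : σ^[n - 1] v = σ^[n - 1] x := ((hVmem v).1 hv).1
      congr 1
      · -- first term
        have h1 : (∑ᶠ (u : X) (_ : σ u = v), ∑ᶠ (w : X) (_ : σ w = x), F (u, w))
            = ∑ᶠ (u : X) (_ : σ u = v), ∑ w ∈ Ys, F (u, w) :=
          finsum_congr fun u => finsum_congr fun _ => hPinner u
        rw [h1]
        refine finsum_cond_eq_sum_of_cond_iff _ (fun {u} hu => ?_)
        obtain ⟨w, _, hFuw⟩ := Finset.exists_ne_zero_of_sum_ne_zero hu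
        have huW : u ∈ W := hF1 (u, w) hFuw
        rw [Finset.mem_filter, hZmem]
        constructor
        · intro huv
          exact ⟨⟨by rw [hiter u, huv, hvV], huW⟩, huv⟩
        · exact fun h => h.2
      · -- second term
        have h2 : ∀ u : X, (∑ᶠ (w : X) (_ : σ w = v), F (u, w))
            = ∑ w ∈ Zs.filter (fun w => σ w = v), F (u, w) := by
          intro u
          refine finsum_cond_eq_sum_of_cond_iff _ (fun {w} hw => ?_)
          have hwW : w ∈ W := hF2 (u, w) hw
          rw [Finset.mem_filter, hZmem]
          constructor
          · intro hwv
            exact ⟨⟨by rw [hiter w, hwv, hvV], hwW⟩, hwv⟩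
          · exact fun h => h.2
        have h2' : (∑ᶠ (u : X) (_ : σ u = x), ∑ᶠ (w : X) (_ : σ w = v), F (u, w))
            = ∑ᶠ (u : X) (_ : σ u = x), ∑ w ∈ Zs.filter (fun w => σ w = v), F (u, w) :=
          finsum_congr fun u => finsum_congr fun _ => h2 u
        rw [h2']
        refine finsum_cond_eq_sum_of_cond_iff _ (fun {u} hu => ?_)
        obtain ⟨w, _, hFuw⟩ := Finset.exists_ne_zero_of_sum_ne_zero hu
        have huW : u ∈ W := hF1 (u, w) hFuw
        rw [hYmem]
        exact ⟨fun h => ⟨h, huW⟩, fun h => h.1⟩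
    · rw [hVmem]
      refine ⟨fun hvx => ⟨hvx, ?_⟩, fun h => h.1⟩
      by_contra hvW
      apply hv
      have hP : (∑ᶠ (u : X) (_ : σ u = v), ∑ᶠ (w : X) (_ : σ w = x), F (u, w)) = 0 := by
        refine finsum_eq_zero_of_forall_eq_zero fun u => ?_
        refine finsum_eq_zero_of_forall_eq_zero' fun hu => ?_
        refine finsum_eq_zero_of_forall_eq_zero fun w => ?_
        refine finsum_eq_zero_of_forall_eq_zero' fun _ => ?_
        by_contra h
        exact hvW ⟨u, hF1 (u, w) h, hu⟩
      have hQ : (∑ᶠ (u : X) (_ : σ u = x), ∑ᶠ (w : X) (_ : σ w = v), F (u, w)) = 0 := by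
        refine finsum_eq_zero_of_forall_eq_zero fun u => ?_
        refine finsum_eq_zero_of_forall_eq_zero' fun _ => ?_
        refine finsum_eq_zero_of_forall_eq_zero fun w => ?_
        refine finsum_eq_zero_of_forall_eq_zero' fun hw => ?_
        by_contra h
        exact hvW ⟨w, hF2 (u, w) h, hw⟩
      rw [hP, hQ, sub_zero]
  -- assemble
  rw [hLHS, hRHS]
  have hmaps : ∀ u ∈ Zs, σ u ∈ Vs := by
    intro u hu
    rcases (hZmem u).1 hu with ⟨h1, h2⟩
    rw [hVmem]
    exact ⟨by rw [← hiter u]; exact h1, ⟨u, h2, rfl⟩⟩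
  simp only [Finset.sum_sub_distrib]
  congr 1
  · rw [Finset.sum_fiberwise_of_maps_to hmaps (fun u => ∑ w ∈ Ys, F (u, w))]
    exact Finset.sum_comm
  · conv_rhs => rw [Finset.sum_comm]
    refine Finset.sum_congr rfl fun u _ => ?_
    exact (Finset.sum_fiberwise_of_maps_to hmaps (fun w => F (u, w))).symm
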